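/- For reciprocal PC matrices C₁, C₂ of the same size n, the matrix compatibility indices satisfy lower-comp(C₁,C₂) ≤ comp(C₁,C₂) ≤ upper-comp(C₁,C₂) ≤ compmax(C₁,C₂). -/

import Mathlib

open Finset

noncomputable def mcomp {n : ℕ} (C1 C2 : Matrix (Fin n) (Fin n) ℝ) : ℝ :=
  (1 / (n : ℝ) ^ 2) * ∑ i, ∑ j, C1 i j * C2 j i

noncomputable def mcompUpper {n : ℕ} (C1 C2 : Matrix (Fin n) (Fin n) ℝ) : ℝ :=
  (2 / ((n : ℝ) * ((n : ℝ) - 1))) *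
    ∑ i, ∑ j, if i < j then max (C1 i j * C2 j i) (C1 j i * C2 i j) else 0

noncomputable def mcompLower {n : ℕ} (C1 C2 : Matrix (Fin n) (Fin n) ℝ) : ℝ :=
  (2 / ((n : ℝ) * ((n : ℝ) - 1))) *
    ∑ i, ∑ j, if i < j then min (C1 i j * C2 j i) (C1 j i * C2 i j) else 0

noncomputable def mcompMax {n : ℕ} (C1 C2 : Matrix (Fin n) (Fin n) ℝ) : ℝ :=
  ⨆ i : Fin n, ⨆ j : Fin n, C1 i j * C2 j i

lemma mcompat_sum_split {n : ℕ} (f : Fin n → Fin n → ℝ) :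
    ∑ i, ∑ j, f i j =
      (∑ i, ∑ j, if i < j then f i j else 0) +
      ((∑ i, ∑ j, if i < j then f j i else 0) + ∑ i, f i i) := by
  have h : ∀ i j : Fin n, f i j =
      (if i < j then f i j else 0) + ((if j < i then f i j else 0) +
        (if i = j then f i j else 0)) := by
    intro i j
    rcases lt_trichotomy i j with h | h | h
    · simp [h, h.ne, not_lt.mpr h.le]
    · simp [h]
    · simp [h, h.ne', not_lt.mpr h.le]
  calc ∑ i, ∑ j, f i j
      = ∑ i, ∑ j, ((if i < j then f i j else 0) + ((if j < i then f i j else 0) +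
        (if i = j then f i j else 0))) := by
        refine Finset.sum_congr rfl fun i _ => Finset.sum_congr rfl fun j _ => h i j
    _ = (∑ i, ∑ j, if i < j then f i j else 0) +
      ((∑ i, ∑ j, if j < i then f i j else 0) + ∑ i, ∑ j, if i = j then f i j else 0) := by
        simp [Finset.sum_add_distrib]
    _ = _ := by
        rw [Finset.sum_comm (f := fun i j => if j < i then f i j else 0)]
        congr 1
        congr 1
        refine Finset.sum_congr rfl fun i _ => ?_
        simp [Finset.sum_ite_eq]

set_option maxHeartbeats 1000000 in
theorem mcompat_chain {n : ℕ} (hn : 2 ≤ n) (C1 C2 : Matrix (Fin n) (Fin n) ℝ)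
    (h1 : ∀ i j, 0 < C1 i j) (h2 : ∀ i j, 0 < C2 i j)
    (hrec1 : ∀ i j, C1 i j * C1 j i = 1) (hrec2 : ∀ i j, C2 i j * C2 j i = 1) :
    mcompLower C1 C2 ≤ mcomp C1 C2 ∧
      mcomp C1 C2 ≤ mcompUpper C1 C2 ∧
        mcompUpper C1 C2 ≤ mcompMax C1 C2 := by
  set a : Fin n → Fin n → ℝ := fun i j => C1 i j * C2 j i with ha_def
  have ha : ∀ i j, 0 < a i j := fun i j => mul_pos (h1 i j) (h2 j i)
  have harec : ∀ i j, a i j * a j i = 1 := by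
    intro i j
    have := hrec1 i j; have := hrec2 i j
    simp only [ha_def]; nlinarith
  have hdiag : ∀ i : Fin n, a i i = 1 := by
    intro i
    have h := harec i i
    nlinarith [ha i i]
  set N : ℝ := (n : ℝ) with hN_def
  have hN2 : (2:ℝ) ≤ N := by rw [hN_def]; exact_mod_cast hn
  have hN0 : 0 < N := by linarith
  have hN1 : 0 < N - 1 := by linarith
  have hX : 0 < N * (N - 1) := mul_pos hN0 hN1
  set Sm : ℝ := ∑ i, ∑ j, if i < j then min (a i j) (a j i) else 0 with hSm_def
  set SM : ℝ := ∑ i, ∑ j, if i < j then max (a i j) (a j i) else 0 with hSM_def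
  set T : ℝ := ∑ i, ∑ j, if i < j then a i j else 0 with hT_def
  set T' : ℝ := ∑ i, ∑ j, if i < j then a j i else 0 with hT'_def
  set c : ℝ := ∑ i : Fin n, ∑ j : Fin n, if i < j then (1:ℝ) else 0 with hc_def
  have hS : ∑ i, ∑ j, a i j = T + (T' + N) := by
    rw [mcompat_sum_split a]
    simp [hdiag, hN_def, hT_def, hT'_def]
  have hcard : c + (c + N) = N ^ 2 := by
    have h := mcompat_sum_split (fun _ _ : Fin n => (1:ℝ))
    have e1 : ∑ i : Fin n, ∑ j : Fin n, (1:ℝ) = N ^ 2 := by simp [hN_def, sq]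
    have e2 : ∑ i : Fin n, (1:ℝ) = N := by simp [hN_def]
    rw [e1, e2, ← hc_def] at h
    linarith
  have hmin1 : ∀ i j : Fin n, min (a i j) (a j i) ≤ 1 := by
    intro i j
    rcases min_cases (a i j) (a j i) with ⟨h, hle⟩ | ⟨h, hle⟩ <;> rw [h] <;>
      nlinarith [harec i j, ha i j, ha j i]
  have hmax1 : ∀ i j : Fin n, 1 ≤ max (a i j) (a j i) := by
    intro i j
    rcases max_cases (a i j) (a j i) with ⟨h, hle⟩ | ⟨h, hle⟩ <;> rw [h] <;>
      nlinarith [harec i j, ha i j, ha j i]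
  have hsum2 : ∀ i j : Fin n, 2 ≤ a i j + a j i := by
    intro i j
    nlinarith [harec i j, ha i j, ha j i,
      mul_nonneg (sq_nonneg (a i j - 1)) (ha j i).le]
  have hSmc : Sm ≤ c := by
    refine Finset.sum_le_sum fun i _ => Finset.sum_le_sum fun j _ => ?_
    split <;> simp [hmin1]
  have hcSM : c ≤ SM := by
    refine Finset.sum_le_sum fun i _ => Finset.sum_le_sum fun j _ => ?_
    split <;> simp [hmax1]
  have hTT2c : 2 * c ≤ T + T' := by
    rw [hT_def, hT'_def, hc_def, ← Finset.sum_add_distrib, Finset.mul_sum]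
    refine Finset.sum_le_sum fun i _ => ?_
    rw [← Finset.sum_add_distrib, Finset.mul_sum]
    refine Finset.sum_le_sum fun j _ => ?_
    split
    · simpa using hsum2 i j
    · simp
  have hminmax : Sm + SM = T + T' := by
    rw [hSm_def, hSM_def, hT_def, hT'_def, ← Finset.sum_add_distrib, ← Finset.sum_add_distrib]
    refine Finset.sum_congr rfl fun i _ => ?_
    rw [← Finset.sum_add_distrib, ← Finset.sum_add_distrib]
    refine Finset.sum_congr rfl fun j _ => ?_
    split
    · exact min_add_max _ _
    · simp
  -- identify defs
  have eL : mcompLower C1 C2 = 2 / (N * (N - 1)) * Sm := rfl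
  have eU : mcompUpper C1 C2 = 2 / (N * (N - 1)) * SM := rfl
  have eC : mcomp C1 C2 = 1 / N ^ 2 * (T + (T' + N)) := by
    rw [mcomp, ← hS]
  set K : ℝ := mcompMax C1 C2 with hK_def
  have hK : ∀ i j, a i j ≤ K := by
    intro i j
    calc a i j ≤ ⨆ j' : Fin n, a i j' :=
          le_ciSup (Set.Finite.bddAbove (Set.finite_range _)) j
      _ ≤ ⨆ i' : Fin n, ⨆ j' : Fin n, a i' j' :=
          le_ciSup (f := fun i' : Fin n => ⨆ j' : Fin n, a i' j')
            (Set.Finite.bddAbove (Set.finite_range _)) i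
  have hSMK : SM ≤ c * K := by
    rw [hSM_def, hc_def, Finset.sum_mul]
    refine Finset.sum_le_sum fun i _ => ?_
    rw [Finset.sum_mul]
    refine Finset.sum_le_sum fun j _ => ?_
    split
    · simpa using max_le (hK i j) (hK j i)
    · simp
  have hring : N * (N - 1) = N ^ 2 - N := by ring
  clear_value a N Sm SM T T' c K
  refine ⟨?_, ?_, ?_⟩
  · rw [eL, eC]
    have g1 : 2 / (N * (N - 1)) * Sm ≤ 1 := by
      rw [div_mul_eq_mul_div, div_le_one hX]
      linarith
    have g2 : (1:ℝ) ≤ 1 / N ^ 2 * (T + (T' + N)) := by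
      rw [div_mul_eq_mul_div, le_div_iff₀ (by positivity)]
      linarith
    linarith
  · rw [eC, eU]
    rw [div_mul_eq_mul_div, div_mul_eq_mul_div, div_le_div_iff₀ (by positivity) hX]
    have hTT : T + T' ≤ 2 * SM := by linarith
    have h4 : 0 ≤ (2 * SM - (T + T')) * (N * (N - 1)) :=
      mul_nonneg (by linarith) hX.le
    have h5 : 0 ≤ (2 * SM - N * (N - 1)) * N :=
      mul_nonneg (by linarith) hN0.le
    nlinarith [h4, h5]
  · rw [eU]
    have h2c : 2 * c = N * (N - 1) := by linarith
    calc 2 / (N * (N - 1)) * SM ≤ 2 / (N * (N - 1)) * (c * K) :=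
          mul_le_mul_of_nonneg_left hSMK (by positivity)
      _ = K := by
          rw [show 2 / (N * (N - 1)) * (c * K) = (2 * c) / (N * (N - 1)) * K by ring,
            h2c, div_self hX.ne', one_mul]
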